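/- Let K be a number field and 𝔓 a prime ideal of 𝒪_K with corresponding place v₀. Suppose every element of K can be written as A/B with A, B ∈ 𝒪_{K,{v₀}} generating the unit ideal of 𝒪_{K,{v₀}}. Then the ideal class group of K is generated by the class of 𝔓. -/

import Mathlib

open NumberField IsDedekindDomain
open scoped nonZeroDivisors

section AuxCount

variable {R : Type*} [CommRing R] [IsDedekindDomain R]
  {K : Type*} [Field K] [Algebra R K] [IsFractionRing R K]

variable {R : Type*} [CommRing R] [IsDedekindDomain R]
  {K : Type*} [Field K] [Algebra R K] [IsFractionRing R K]

/-- If `z₁, z₂` are `w`-integral and not both zero, the fractional ideal they span has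
nonnegative count at `w`. -/
lemma aux_count_nonneg (w : HeightOneSpectrum R) (z₁ z₂ : K)
    (h₁ : w.valuation K z₁ ≤ 1) (h₂ : w.valuation K z₂ ≤ 1)
    (hne : FractionalIdeal.spanSingleton R⁰ z₁ + FractionalIdeal.spanSingleton R⁰ z₂ ≠ 0) :
    0 ≤ FractionalIdeal.count K w
      (FractionalIdeal.spanSingleton R⁰ z₁ + FractionalIdeal.spanSingleton R⁰ z₂) := by
  classical
  obtain ⟨a₁, b₁, hb₁, hz₁⟩ := IsFractionRing.div_surjective (A := R) z₁
  obtain ⟨a₂, b₂, hb₂, hz₂⟩ := IsFractionRing.div_surjective (A := R) z₂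
  set f := algebraMap R K with hf
  have hb₁0 : f b₁ ≠ 0 := IsFractionRing.to_map_ne_zero_of_mem_nonZeroDivisors hb₁
  have hb₂0 : f b₂ ≠ 0 := IsFractionRing.to_map_ne_zero_of_mem_nonZeroDivisors hb₂
  set d := b₁ * b₂ with hd
  have hdm : d ∈ R⁰ := mul_mem hb₁ hb₂
  have hd0 : d ≠ 0 := nonZeroDivisors.ne_zero hdm
  have hfd0 : f d ≠ 0 := IsFractionRing.to_map_ne_zero_of_mem_nonZeroDivisors hdm
  set n₁ := a₁ * b₂ with hn₁
  set n₂ := a₂ * b₁ with hn₂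
  have hz₁' : z₁ = f n₁ / f d := by
    rw [← hz₁, hn₁, hd, map_mul, map_mul, mul_div_mul_right _ _ hb₂0]
  have hz₂' : z₂ = f n₂ / f d := by
    rw [← hz₂, hn₂, hd, map_mul, map_mul]
    rw [mul_comm (f b₁) (f b₂), mul_div_mul_right _ _ hb₁0]
  set N : Ideal R := Ideal.span {n₁} ⊔ Ideal.span {n₂} with hN
  have hrep : FractionalIdeal.spanSingleton R⁰ z₁ + FractionalIdeal.spanSingleton R⁰ z₂
      = FractionalIdeal.spanSingleton R⁰ ((algebraMap R K) d)⁻¹ * (N : FractionalIdeal R⁰ K) := by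
    rw [hN, FractionalIdeal.coeIdeal_sup, FractionalIdeal.coeIdeal_span_singleton,
      FractionalIdeal.coeIdeal_span_singleton, mul_add,
      FractionalIdeal.spanSingleton_mul_spanSingleton,
      FractionalIdeal.spanSingleton_mul_spanSingleton, hz₁', hz₂']
    simp only [inv_mul_eq_div, hf]
  have hcount := FractionalIdeal.count_well_defined K w hne hrep
  -- the key divisibility
  set k := (Associates.mk w.asIdeal).count (Associates.mk (Ideal.span {d})).factors with hk
  have key : ∀ (n : R), ((f n) / (f d)) ∈ {z : K | w.valuation K z ≤ 1} →
      w.asIdeal ^ k ∣ Ideal.span {n} := by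
    intro n hval
    by_cases hn : n = 0
    · rw [hn, Set.singleton_zero, Ideal.span_zero]
      exact dvd_zero _
    · have hv : w.valuation K (f n / f d) ≤ 1 := hval
      rw [map_div₀, hf, HeightOneSpectrum.valuation_of_algebraMap,
        HeightOneSpectrum.valuation_of_algebraMap, HeightOneSpectrum.intValuation_apply,
        HeightOneSpectrum.intValuation_apply] at hv
      have hdv : (0 : WithZero (Multiplicative ℤ)) < w.intValuationDef d :=
        zero_lt_iff.mpr (HeightOneSpectrum.intValuation_ne_zero w d hd0)
      rw [div_le_one₀ hdv] at hv
      rw [w.intValuationDef_if_neg hd0, ← hk] at hv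
      exact (w.intValuation_le_pow_iff_dvd n k).mp hv
  have hdvd₁ : w.asIdeal ^ k ∣ Ideal.span {n₁} := key n₁ (by rw [← hz₁']; exact h₁)
  have hdvd₂ : w.asIdeal ^ k ∣ Ideal.span {n₂} := key n₂ (by rw [← hz₂']; exact h₂)
  have hNdvd : w.asIdeal ^ k ∣ N := by
    rw [Ideal.dvd_iff_le]
    exact sup_le (Ideal.dvd_iff_le.mp hdvd₁) (Ideal.dvd_iff_le.mp hdvd₂)
  have hN0 : N ≠ 0 := by
    intro h0
    apply hne
    have h₁' : Ideal.span {n₁} = ⊥ := le_bot_iff.mp (le_trans le_sup_left h0.le)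
    have h₂' : Ideal.span {n₂} = ⊥ := le_bot_iff.mp (le_trans le_sup_right h0.le)
    rw [Ideal.span_singleton_eq_bot] at h₁' h₂'
    rw [hz₁', hz₂', h₁', h₂', map_zero, zero_div, FractionalIdeal.spanSingleton_zero, add_zero]
  have hkle : k ≤ (Associates.mk w.asIdeal).count (Associates.mk N).factors := by
    rw [← Associates.prime_pow_dvd_iff_le (Associates.mk_ne_zero.mpr hN0)
      w.associates_irreducible]
    rw [← Associates.mk_pow]
    exact Associates.mk_dvd_mk.mpr hNdvd
  rw [hcount, sub_nonneg]
  exact_mod_cast hkle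

end AuxCount

theorem aux_prime (K : Type*) [Field K] [NumberField K]
    (v₀ : HeightOneSpectrum (𝓞 K))
    (hP : v₀.asIdeal ∈ nonZeroDivisors (Ideal (𝓞 K)))
    (h : ∀ α : K, ∃ A B : K,
      (∀ w : HeightOneSpectrum (𝓞 K), w ≠ v₀ → w.valuation K A ≤ 1) ∧
      (∀ w : HeightOneSpectrum (𝓞 K), w ≠ v₀ → w.valuation K B ≤ 1) ∧
      B ≠ 0 ∧ α = A / B ∧
      ∃ x y : K,
        (∀ w : HeightOneSpectrum (𝓞 K), w ≠ v₀ → w.valuation K x ≤ 1) ∧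
        (∀ w : HeightOneSpectrum (𝓞 K), w ≠ v₀ → w.valuation K y ≤ 1) ∧
        x * A + y * B = 1)
    (w : HeightOneSpectrum (𝓞 K)) (hw : w.asIdeal ∈ nonZeroDivisors (Ideal (𝓞 K))) :
    ClassGroup.mk0 ⟨w.asIdeal, hw⟩ ∈ Subgroup.zpowers (ClassGroup.mk0 ⟨v₀.asIdeal, hP⟩) := by
  classical
  set R := 𝓞 K
  set f := algebraMap R K with hf
  -- choose a uniformizer-like element π
  obtain ⟨π, hπ1, hπ2⟩ := Ideal.exists_mem_pow_notMem_pow_succ w.asIdeal w.ne_bot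
    w.isPrime.ne_top 1
  rw [pow_one] at hπ1
  have hπ0 : π ≠ 0 := fun hh => hπ2 (hh ▸ zero_mem _)
  have hfπ0 : f π ≠ 0 := fun hh => hπ0 ((map_eq_zero_iff f (IsFractionRing.injective R K)).mp hh)
  obtain ⟨M, hM⟩ : w.asIdeal ∣ Ideal.span {π} := Ideal.dvd_span_singleton.mpr hπ1
  have hspan0 : Ideal.span {π} ≠ ⊥ := by
    rw [ne_eq, Ideal.span_singleton_eq_bot]; exact hπ0
  have hM0 : M ≠ 0 := by
    rintro rfl; rw [mul_zero] at hM; exact hspan0 hM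
  have hMw : ¬ M ≤ w.asIdeal := by
    intro hle
    obtain ⟨M₂, rfl⟩ := Ideal.dvd_iff_le.mpr hle
    apply hπ2
    have hmem : π ∈ Ideal.span {π} := Ideal.mem_span_singleton_self π
    rw [hM] at hmem
    have : w.asIdeal * (w.asIdeal * M₂) ≤ w.asIdeal ^ (1 + 1) := by
      rw [pow_succ, pow_one, ← mul_assoc]
      exact Ideal.mul_le_left
    exact this hmem
  obtain ⟨a, haM, haw⟩ := SetLike.not_le_iff_exists.mp hMw
  have hπM : π ∈ M := by
    have hmem : π ∈ Ideal.span {π} := Ideal.mem_span_singleton_self π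
    rw [hM] at hmem
    exact Ideal.mul_le_right hmem
  -- span {π, a} = M
  have hMeq : Ideal.span {π, a} = M := by
    have hle : Ideal.span {π, a} ≤ M := by
      rw [Ideal.span_insert]
      exact sup_le ((Ideal.span_singleton_le_iff_mem M).mpr hπM)
        ((Ideal.span_singleton_le_iff_mem M).mpr haM)
    obtain ⟨T, hT⟩ : M ∣ Ideal.span {π, a} := Ideal.dvd_iff_le.mpr hle
    obtain ⟨S, hS⟩ : Ideal.span {π, a} ∣ Ideal.span {π} :=
      Ideal.dvd_iff_le.mpr (Ideal.span_mono (by simp : ({π} : Set R) ⊆ {π, a}))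
    have hws : w.asIdeal = T * S := by
      apply mul_left_cancel₀ hM0
      rw [← mul_assoc, ← hT, ← hS, hM, mul_comm]
    rcases w.irreducible.isUnit_or_isUnit hws with hu | hu
    · rw [hT, Ideal.isUnit_iff.mp hu, Ideal.mul_top]
    · exfalso
      rw [Ideal.isUnit_iff.mp hu, Ideal.mul_top] at hS
      apply haw
      have : a ∈ Ideal.span {π} := by
        rw [hS]; exact Ideal.subset_span (by simp)
      rw [hM] at this
      exact Ideal.mul_le_left this
  -- apply the hypothesis to α = a / π
  obtain ⟨A, B, hA, hB, hB0, hαAB, x, y, hx, hy, hxy⟩ := h (f a / f π)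
  set J := FractionalIdeal.spanSingleton R⁰ A + FractionalIdeal.spanSingleton R⁰ B with hJ
  set J' := FractionalIdeal.spanSingleton R⁰ x + FractionalIdeal.spanSingleton R⁰ y with hJ'
  have hsB : FractionalIdeal.spanSingleton R⁰ B ≠ 0 :=
    FractionalIdeal.spanSingleton_ne_zero_iff.mpr hB0
  have hJ0 : J ≠ 0 := by
    intro h0
    apply hsB
    refine le_antisymm ?_ (FractionalIdeal.zero_le _)
    calc FractionalIdeal.spanSingleton R⁰ B ≤ J := by
          rw [hJ, ← FractionalIdeal.sup_eq_add]; exact le_sup_right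
      _ = 0 := h0
  have hJ'0 : J' ≠ 0 := by
    intro h0
    have hx0 : FractionalIdeal.spanSingleton R⁰ x = 0 := by
      refine le_antisymm ?_ (FractionalIdeal.zero_le _)
      calc FractionalIdeal.spanSingleton R⁰ x ≤ J' := by
            rw [hJ', ← FractionalIdeal.sup_eq_add]; exact le_sup_left
        _ = 0 := h0
    have hy0 : FractionalIdeal.spanSingleton R⁰ y = 0 := by
      refine le_antisymm ?_ (FractionalIdeal.zero_le _)
      calc FractionalIdeal.spanSingleton R⁰ y ≤ J' := by
            rw [hJ', ← FractionalIdeal.sup_eq_add]; exact le_sup_right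
        _ = 0 := h0
    rw [FractionalIdeal.spanSingleton_eq_zero_iff] at hx0 hy0
    rw [hx0, hy0, zero_mul, zero_mul, add_zero] at hxy
    exact zero_ne_one hxy
  -- counts of J vanish away from v₀
  have hcnt : ∀ u : HeightOneSpectrum R, u ≠ v₀ → FractionalIdeal.count K u J = 0 := by
    intro u hu
    have h1 : 0 ≤ FractionalIdeal.count K u J :=
      aux_count_nonneg u A B (hA u hu) (hB u hu) hJ0
    have h2 : 0 ≤ FractionalIdeal.count K u J' :=
      aux_count_nonneg u x y (hx u hu) (hy u hu) hJ'0
    have hmem : (1 : K) ∈ J' * J := by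
      rw [← hxy]
      have hxJ' : x ∈ J' := by
        have : FractionalIdeal.spanSingleton R⁰ x ≤ J' := by
          rw [hJ', ← FractionalIdeal.sup_eq_add]; exact le_sup_left
        exact this (FractionalIdeal.mem_spanSingleton_self R⁰ x)
      have hyJ' : y ∈ J' := by
        have : FractionalIdeal.spanSingleton R⁰ y ≤ J' := by
          rw [hJ', ← FractionalIdeal.sup_eq_add]; exact le_sup_right
        exact this (FractionalIdeal.mem_spanSingleton_self R⁰ y)
      have hAJ : A ∈ J := by
        have : FractionalIdeal.spanSingleton R⁰ A ≤ J := by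
          rw [hJ, ← FractionalIdeal.sup_eq_add]; exact le_sup_left
        exact this (FractionalIdeal.mem_spanSingleton_self R⁰ A)
      have hBJ : B ∈ J := by
        have : FractionalIdeal.spanSingleton R⁰ B ≤ J := by
          rw [hJ, ← FractionalIdeal.sup_eq_add]; exact le_sup_right
        exact this (FractionalIdeal.mem_spanSingleton_self R⁰ B)
      have h1m : x * A ∈ ((J' * J : FractionalIdeal R⁰ K) : Submodule R K) :=
        FractionalIdeal.mem_coe.mpr (FractionalIdeal.mul_mem_mul hxJ' hAJ)
      have h2m : y * B ∈ ((J' * J : FractionalIdeal R⁰ K) : Submodule R K) :=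
        FractionalIdeal.mem_coe.mpr (FractionalIdeal.mul_mem_mul hyJ' hBJ)
      exact FractionalIdeal.mem_coe.mp (Submodule.add_mem _ h1m h2m)
    have hle : (1 : FractionalIdeal R⁰ K) ≤ J' * J := by
      have := FractionalIdeal.spanSingleton_le_iff_mem.mpr hmem
      rwa [FractionalIdeal.spanSingleton_one] at this
    have h3 : FractionalIdeal.count K u (J' * J) ≤ FractionalIdeal.count K u 1 :=
      FractionalIdeal.count_mono K u one_ne_zero hle
    rw [FractionalIdeal.count_one, FractionalIdeal.count_mul K u hJ'0 hJ0] at h3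
    omega
  set n := FractionalIdeal.count K v₀ J with hn
  have hfact : J = (v₀.asIdeal : FractionalIdeal R⁰ K) ^ n := by
    conv_lhs => rw [← FractionalIdeal.finprod_heightOneSpectrum_factorization' K hJ0]
    exact finprod_eq_single _ v₀ (fun u hu => by rw [hcnt u hu, zpow_zero])
  -- key identity
  have hE1 : FractionalIdeal.spanSingleton R⁰ B⁻¹ * J
      = FractionalIdeal.spanSingleton R⁰ (f a / f π) + 1 := by
    rw [hJ, mul_add, FractionalIdeal.spanSingleton_mul_spanSingleton,
      FractionalIdeal.spanSingleton_mul_spanSingleton, inv_mul_cancel₀ hB0,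
      FractionalIdeal.spanSingleton_one, inv_mul_eq_div, ← hαAB]
  have hE2 : FractionalIdeal.spanSingleton R⁰ (f π)⁻¹ * (M : FractionalIdeal R⁰ K)
      = FractionalIdeal.spanSingleton R⁰ (f a / f π) + 1 := by
    rw [← hMeq, Ideal.span_insert, FractionalIdeal.coeIdeal_sup,
      FractionalIdeal.coeIdeal_span_singleton, FractionalIdeal.coeIdeal_span_singleton,
      mul_add, FractionalIdeal.spanSingleton_mul_spanSingleton,
      FractionalIdeal.spanSingleton_mul_spanSingleton, inv_mul_cancel₀ hfπ0,
      FractionalIdeal.spanSingleton_one, inv_mul_eq_div, add_comm]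
  have hE : FractionalIdeal.spanSingleton R⁰ B⁻¹ * J
      = FractionalIdeal.spanSingleton R⁰ (f π)⁻¹ * (M : FractionalIdeal R⁰ K) := by
    rw [hE1, hE2]
  -- main equation
  have hwM : (w.asIdeal : FractionalIdeal R⁰ K) * (M : FractionalIdeal R⁰ K)
      = FractionalIdeal.spanSingleton R⁰ (f π) := by
    rw [← FractionalIdeal.coeIdeal_mul, ← hM, FractionalIdeal.coeIdeal_span_singleton]
  have hmain : (w.asIdeal : FractionalIdeal R⁰ K)
      * (v₀.asIdeal : FractionalIdeal R⁰ K) ^ n = FractionalIdeal.spanSingleton R⁰ B := by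
    have hJeq : J = FractionalIdeal.spanSingleton R⁰ B
        * (FractionalIdeal.spanSingleton R⁰ (f π)⁻¹ * (M : FractionalIdeal R⁰ K)) := by
      rw [← hE, ← mul_assoc, FractionalIdeal.spanSingleton_mul_spanSingleton,
        mul_inv_cancel₀ hB0, FractionalIdeal.spanSingleton_one, one_mul]
    calc (w.asIdeal : FractionalIdeal R⁰ K) * (v₀.asIdeal : FractionalIdeal R⁰ K) ^ n
        = (w.asIdeal : FractionalIdeal R⁰ K) * J := by rw [hfact]
      _ = FractionalIdeal.spanSingleton R⁰ B * (FractionalIdeal.spanSingleton R⁰ (f π)⁻¹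
            * ((w.asIdeal : FractionalIdeal R⁰ K) * (M : FractionalIdeal R⁰ K))) := by
          rw [hJeq]; ring
      _ = FractionalIdeal.spanSingleton R⁰ B := by
          rw [hwM, FractionalIdeal.spanSingleton_mul_spanSingleton, inv_mul_cancel₀ hfπ0,
            FractionalIdeal.spanSingleton_one, mul_one]
  -- pass to the class group
  have hu : FractionalIdeal.mk0 K ⟨w.asIdeal, hw⟩ * (FractionalIdeal.mk0 K ⟨v₀.asIdeal, hP⟩) ^ n
      = toPrincipalIdeal R K (Units.mk0 B hB0) := by
    apply Units.ext
    rw [Units.val_mul, Units.val_zpow_eq_zpow_val, FractionalIdeal.coe_mk0,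
      FractionalIdeal.coe_mk0, coe_toPrincipalIdeal, Units.val_mk0]
    exact hmain
  have hcg := congrArg (ClassGroup.mk (K := K)) hu
  rw [map_mul, map_zpow, ClassGroup.mk_mk0, ClassGroup.mk_mk0] at hcg
  have hone : ClassGroup.mk (K := K) (toPrincipalIdeal R K (Units.mk0 B hB0)) = 1 := by
    rw [ClassGroup.mk_eq_one_iff]
    exact ⟨⟨B, by rw [coe_toPrincipalIdeal, Units.val_mk0, FractionalIdeal.coe_spanSingleton]⟩⟩
  rw [hone] at hcg
  have : ClassGroup.mk0 ⟨w.asIdeal, hw⟩ = (ClassGroup.mk0 ⟨v₀.asIdeal, hP⟩) ^ (-n) := by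
    rw [zpow_neg, eq_inv_iff_mul_eq_one]
    exact hcg
  exact this ▸ Subgroup.zpow_mem_zpowers _ _

/-- If every element of `K` is a quotient `A/B` of two `{𝔓}`-integers generating the
unit ideal of the ring of `{𝔓}`-integers, then the class group of `K` is generated by
the class of `𝔓`. -/
theorem stmt_18 (K : Type*) [Field K] [NumberField K]
    (v₀ : HeightOneSpectrum (𝓞 K))
    (hP : v₀.asIdeal ∈ nonZeroDivisors (Ideal (𝓞 K)))
    (h : ∀ α : K, ∃ A B : K,
      (∀ w : HeightOneSpectrum (𝓞 K), w ≠ v₀ → w.valuation K A ≤ 1) ∧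
      (∀ w : HeightOneSpectrum (𝓞 K), w ≠ v₀ → w.valuation K B ≤ 1) ∧
      B ≠ 0 ∧ α = A / B ∧
      ∃ x y : K,
        (∀ w : HeightOneSpectrum (𝓞 K), w ≠ v₀ → w.valuation K x ≤ 1) ∧
        (∀ w : HeightOneSpectrum (𝓞 K), w ≠ v₀ → w.valuation K y ≤ 1) ∧
        x * A + y * B = 1) :
    ∀ c : ClassGroup (𝓞 K), c ∈ Subgroup.zpowers (ClassGroup.mk0 ⟨v₀.asIdeal, hP⟩) := by
  have key : ∀ I : Ideal (𝓞 K), ∀ hI : I ∈ nonZeroDivisors (Ideal (𝓞 K)),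
      ClassGroup.mk0 ⟨I, hI⟩ ∈ Subgroup.zpowers (ClassGroup.mk0 ⟨v₀.asIdeal, hP⟩) := by
    intro I
    refine UniqueFactorizationMonoid.induction_on_prime I ?_ ?_ ?_
    · intro hI
      exact absurd rfl (mem_nonZeroDivisors_iff_ne_zero.mp hI)
    · intro x hx hI
      have hx' : x = ⊤ := Ideal.isUnit_iff.mp hx
      have h1 : ClassGroup.mk0 ⟨x, hI⟩ = 1 := by
        apply (ClassGroup.mk0_eq_one_iff hI).mpr
        exact ⟨⟨1, by rw [hx', Ideal.submodule_span_eq, Ideal.span_singleton_one]⟩⟩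
      rw [h1]
      exact Subgroup.one_mem _
    · intro I' p hI' hp ih hmem
      have hpm : p ∈ nonZeroDivisors (Ideal (𝓞 K)) :=
        mem_nonZeroDivisors_iff_ne_zero.mpr hp.ne_zero
      have hI'm : I' ∈ nonZeroDivisors (Ideal (𝓞 K)) :=
        mem_nonZeroDivisors_iff_ne_zero.mpr hI'
      have heq : (⟨p * I', hmem⟩ : (Ideal (𝓞 K))⁰) = ⟨p, hpm⟩ * ⟨I', hI'm⟩ := rfl
      rw [heq, MonoidHom.map_mul]
      exact Subgroup.mul_mem _
        (aux_prime K v₀ hP h ⟨p, Ideal.isPrime_of_prime hp, hp.ne_zero⟩ hpm) (ih hI'm)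
  intro c
  obtain ⟨⟨I, hI⟩, rfl⟩ := ClassGroup.mk0_surjective c
  exact key I hI
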